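/- There exists δ₀ > 0 such that the following holds for every d ≥ 1 and every κ > 0. Let V ⊆ ℝ^d be a nonempty open convex set with κ·diam(V) ≤ δ₀; let H : V → ℝ be differentiable with H(x) > 0 and ‖DH(x)‖ ≤ κ·H(x) for all x ∈ V; and let u : V → ℂ be differentiable with |u(x)| ≤ H(x) and ‖Du(x)‖ ≤ κ·H(x) for all x ∈ V. Then either |u(x)| ≤ (3/4)·H(x) for all x ∈ V, or |u(x)| ≥ (1/4)·H(x) for all x ∈ V. -/

import Mathlib

open scoped ENNReal

noncomputable section

abbrev Euc (d : ℕ) := EuclideanSpace ℝ (Fin d)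

/-- **Dichotomy lemma for functions dominated by the cone `C_κ`.**
There is a universal `δ₀ > 0` such that for every `d ≥ 1`, `κ > 0`, every nonempty open
convex set `V ⊆ ℝ^d` with `κ·diam(V) ≤ δ₀`, every differentiable `H : V → ℝ` with `H > 0`
and `‖DH‖ ≤ κH` on `V`, and every differentiable `u : V → ℂ` with `|u| ≤ H` and
`‖Du‖ ≤ κH` on `V`, either `|u| ≤ (3/4)H` on all of `V` or `|u| ≥ (1/4)H` on all of `V`. -/
theorem cone_dichotomy :
    ∃ δ₀ : ℝ, 0 < δ₀ ∧ ∀ (d : ℕ), 1 ≤ d → ∀ κ : ℝ, 0 < κ →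
      ∀ V : Set (Euc d), V.Nonempty → IsOpen V → Convex ℝ V →
        ENNReal.ofReal κ * EMetric.diam V ≤ ENNReal.ofReal δ₀ →
      ∀ H : Euc d → ℝ, ∀ u : Euc d → ℂ,
        (∀ x ∈ V, DifferentiableAt ℝ H x ∧ 0 < H x ∧ ‖fderiv ℝ H x‖ ≤ κ * H x) →
        (∀ x ∈ V, DifferentiableAt ℝ u x ∧ ‖u x‖ ≤ H x ∧
          ‖fderiv ℝ u x‖ ≤ κ * H x) →
        ((∀ x ∈ V, ‖u x‖ ≤ 3 / 4 * H x) ∨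
          (∀ x ∈ V, 1 / 4 * H x ≤ ‖u x‖)) := by
  refine ⟨1/8, by norm_num, ?_⟩
  intro d _hd κ hκ V _hVne _hVopen hVconv hdiam H u hH hu
  -- Distance bound: κ · dist x y ≤ 1/8 for x, y ∈ V
  have hdist : ∀ x ∈ V, ∀ y ∈ V, κ * dist x y ≤ 1/8 := by
    intro x hx y hy
    have h2 : ENNReal.ofReal (κ * dist x y) ≤ ENNReal.ofReal (1/8) := by
      rw [ENNReal.ofReal_mul hκ.le]
      calc ENNReal.ofReal κ * ENNReal.ofReal (dist x y)
          = ENNReal.ofReal κ * edist x y := by rw [edist_dist]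
        _ ≤ ENNReal.ofReal κ * EMetric.diam V := by
            gcongr
            exact EMetric.edist_le_diam_of_mem hx hy
        _ ≤ _ := hdiam
    exact (ENNReal.ofReal_le_ofReal_iff (by norm_num)).mp h2
  -- log H is κ-Lipschitz on V
  have hlog : ∀ x ∈ V, ∀ y ∈ V, Real.log (H y) - Real.log (H x) ≤ 1/8 := by
    intro x hx y hy
    have hdiff : ∀ z ∈ V, DifferentiableAt ℝ (fun w => Real.log (H w)) z := fun z hz =>
      ((hH z hz).1.hasFDerivAt.log (hH z hz).2.1.ne').differentiableAt
    have hbound : ∀ z ∈ V, ‖fderiv ℝ (fun w => Real.log (H w)) z‖ ≤ κ := by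
      intro z hz
      obtain ⟨hd, hpos, hb⟩ := hH z hz
      rw [(hd.hasFDerivAt.log hpos.ne').fderiv, norm_smul, norm_inv,
        Real.norm_eq_abs, abs_of_pos hpos]
      rw [inv_mul_le_iff₀ hpos]
      linarith [hb]
    have := hVconv.norm_image_sub_le_of_norm_fderiv_le hdiff hbound hx hy
    calc Real.log (H y) - Real.log (H x)
        ≤ ‖Real.log (H y) - Real.log (H x)‖ := le_abs_self _
      _ ≤ κ * ‖y - x‖ := this
      _ = κ * dist y x := by rw [dist_eq_norm]
      _ ≤ 1/8 := hdist y hy x hx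
  -- Hence H y ≤ 2 H x for all x, y in V
  have hHcomp : ∀ x ∈ V, ∀ y ∈ V, H y ≤ 2 * H x := by
    intro x hx y hy
    have hpx := (hH x hx).2.1
    have hpy := (hH y hy).2.1
    have h18 : (1:ℝ)/8 ≤ Real.log 2 := by
      have := Real.log_two_gt_d9
      linarith
    have : Real.log (H y) ≤ Real.log (2 * H x) := by
      rw [Real.log_mul (by norm_num) hpx.ne']
      have := hlog x hx y hy
      linarith
    exact (Real.log_le_log_iff hpy (by linarith)).mp this
  by_cases hcase : ∀ x ∈ V, ‖u x‖ ≤ 3 / 4 * H x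
  · exact Or.inl hcase
  right
  push_neg at hcase
  obtain ⟨x₀, hx₀, hgt⟩ := hcase
  intro y hy
  -- u is (κ·2H(x₀))-Lipschitz on V
  have hub : ∀ z ∈ V, ‖fderiv ℝ u z‖ ≤ κ * (2 * H x₀) := by
    intro z hz
    obtain ⟨hd, hle, hb⟩ := hu z hz
    have := hHcomp x₀ hx₀ z hz
    calc ‖fderiv ℝ u z‖ ≤ κ * H z := hb
      _ ≤ κ * (2 * H x₀) := by nlinarith
  have hdiffu : ∀ z ∈ V, DifferentiableAt ℝ u z := fun z hz => (hu z hz).1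
  have hmvt := hVconv.norm_image_sub_le_of_norm_fderiv_le hdiffu hub hx₀ hy
  have hpx₀ := (hH x₀ hx₀).2.1
  have hlip : ‖u y - u x₀‖ ≤ 1/4 * H x₀ := by
    calc ‖u y - u x₀‖ ≤ κ * (2 * H x₀) * ‖y - x₀‖ := hmvt
      _ = 2 * H x₀ * (κ * dist y x₀) := by rw [dist_eq_norm]; ring
      _ ≤ 2 * H x₀ * (1/8) := by
          have := hdist y hy x₀ hx₀
          nlinarith
      _ = 1/4 * H x₀ := by ring
  have habs : ‖u x₀‖ - ‖u y‖ ≤ ‖u y - u x₀‖ := by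
    have h2 : ‖u x₀‖ - ‖u y‖ ≤ ‖u y - u x₀‖ := by
      have := norm_sub_norm_le (u x₀) (u y)
      rw [norm_sub_rev] at this
      linarith
    exact h2
  have hHy := hHcomp x₀ hx₀ y hy
  have : ‖u y‖ ≥ 1/2 * H x₀ := by linarith
  linarith

end
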